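/- In the four-tangent I-patch I = w₁·L₁·L₂·C₂² + w₂·L₃·L₄·C₁² + w₀·C₁²·C₂², if p ∈ ℝ² satisfies L₃(p) = 0 and C₂(p) = 0, then I(p) = 0 and ∇I(p) = w₂·L₄(p)·C₁(p)²·∇L₃(p); hence if w₂ ≠ 0, L₄(p) ≠ 0, C₁(p) ≠ 0 and ∇L₃(p) ≠ 0, the line L₃ = 0 is tangent to I = 0 at p. -/

import Mathlib

/-- Four-tangent I-patch tangency at the other side: with affine `L₁,…,L₄, C₁, C₂` and
`I = w₁·L₁·L₂·C₂² + w₂·L₃·L₄·C₁² + w₀·C₁²·C₂²`, if `L₃(p) = 0` and `C₂(p) = 0` then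
`I(p) = 0` and `∇I(p) = w₂·L₄(p)·C₁(p)²·∇L₃(p)`; hence if `w₂ ≠ 0`, `L₄(p) ≠ 0`,
`C₁(p) ≠ 0` and `∇L₃(p) ≠ 0`, the line `L₃ = 0` is tangent to `I = 0` at `p`. -/
theorem stmt_6
    (a₁ b₁ c₁ a₂ b₂ c₂ a₃ b₃ c₃ a₄ b₄ c₄ aC₁ bC₁ cC₁ aC₂ bC₂ cC₂ : ℝ)
    (L₁ L₂ L₃ L₄ C₁ C₂ : ℝ × ℝ → ℝ)
    (hL₁ : ∀ q, L₁ q = a₁ * q.1 + b₁ * q.2 + c₁)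
    (hL₂ : ∀ q, L₂ q = a₂ * q.1 + b₂ * q.2 + c₂)
    (hL₃ : ∀ q, L₃ q = a₃ * q.1 + b₃ * q.2 + c₃)
    (hL₄ : ∀ q, L₄ q = a₄ * q.1 + b₄ * q.2 + c₄)
    (hC₁ : ∀ q, C₁ q = aC₁ * q.1 + bC₁ * q.2 + cC₁)
    (hC₂ : ∀ q, C₂ q = aC₂ * q.1 + bC₂ * q.2 + cC₂)
    (w₀ w₁ w₂ : ℝ)
    (I : ℝ × ℝ → ℝ)
    (hI : ∀ q, I q = w₁ * (L₁ q * L₂ q * (C₂ q) ^ 2)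
      + w₂ * (L₃ q * L₄ q * (C₁ q) ^ 2) + w₀ * ((C₁ q) ^ 2 * (C₂ q) ^ 2))
    (p : ℝ × ℝ) (hp₃ : L₃ p = 0) (hpC : C₂ p = 0) :
    I p = 0 ∧
    fderiv ℝ I p = (w₂ * L₄ p * (C₁ p) ^ 2) • fderiv ℝ L₃ p ∧
    (w₂ ≠ 0 → L₄ p ≠ 0 → C₁ p ≠ 0 → fderiv ℝ L₃ p ≠ 0 →
      ∃ c : ℝ, c ≠ 0 ∧ fderiv ℝ I p = c • fderiv ℝ L₃ p) := by
  have hval : I p = 0 := by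
    rw [hI, hp₃, hpC]; ring
  -- derivatives of the affine functions
  have haff : ∀ (a b c : ℝ),
      HasFDerivAt (fun q : ℝ × ℝ => a * q.1 + b * q.2 + c)
        (a • (ContinuousLinearMap.fst ℝ ℝ ℝ) + b • (ContinuousLinearMap.snd ℝ ℝ ℝ)) p := by
    intro a b c
    exact ((hasFDerivAt_fst.const_mul a).add (hasFDerivAt_snd.const_mul b)).add_const c
  have hd1 : HasFDerivAt L₁ _ p := (funext hL₁ : L₁ = _) ▸ haff a₁ b₁ c₁
  have hd2 : HasFDerivAt L₂ _ p := (funext hL₂ : L₂ = _) ▸ haff a₂ b₂ c₂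
  have hd3 : HasFDerivAt L₃ _ p := (funext hL₃ : L₃ = _) ▸ haff a₃ b₃ c₃
  have hd4 : HasFDerivAt L₄ _ p := (funext hL₄ : L₄ = _) ▸ haff a₄ b₄ c₄
  have hdC1 : HasFDerivAt C₁ _ p := (funext hC₁ : C₁ = _) ▸ haff aC₁ bC₁ cC₁
  have hdC2 : HasFDerivAt C₂ _ p := (funext hC₂ : C₂ = _) ▸ haff aC₂ bC₂ cC₂
  have hA := ((hd1.mul hd2).mul (hdC2.mul hdC2)).const_mul w₁
  have hB := ((hd3.mul hd4).mul (hdC1.mul hdC1)).const_mul w₂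
  have hC := ((hdC1.mul hdC1).mul (hdC2.mul hdC2)).const_mul w₀
  have hIeq : I = fun q => w₁ * (L₁ q * L₂ q * (C₂ q * C₂ q))
      + w₂ * (L₃ q * L₄ q * (C₁ q * C₁ q)) + w₀ * ((C₁ q * C₁ q) * (C₂ q * C₂ q)) := by
    funext q; rw [hI]; ring
  have hItot : HasFDerivAt I _ p := hIeq ▸ (show HasFDerivAt (fun q => w₁ * (L₁ q * L₂ q * (C₂ q * C₂ q))
      + w₂ * (L₃ q * L₄ q * (C₁ q * C₁ q)) + w₀ * ((C₁ q * C₁ q) * (C₂ q * C₂ q))) _ p from (hA.add hB).add hC)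
  have hfd := hItot.fderiv
  have hfd3 := hd3.fderiv
  have key : fderiv ℝ I p = (w₂ * L₄ p * (C₁ p) ^ 2) • fderiv ℝ L₃ p := by
    rw [hfd, hfd3]
    ext <;> simp [hp₃, hpC] <;> ring
  exact ⟨hval, key, fun hw2 hL4 hC1 _ =>
    ⟨w₂ * L₄ p * (C₁ p) ^ 2, by positivity, key⟩⟩
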